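/- (Theorem 2.1, d = 2, uniqueness) Let n ≥ 1, r > 0, and let F, G : ℤ² → GL(n,ℂ) satisfy F(y) = G(y) = I for all y ∉ B_r ∩ ℤ². If S(F)(γ_z) = S(G)(γ_z) for every z ∈ ℤ², then F = G. -/

import Mathlib

noncomputable section

open Matrix

/-- Embedding of the lattice `ℤ^d` into Euclidean `ℝ^d`. -/
def emb {d : ℕ} (z : Fin d → ℤ) : EuclideanSpace ℝ (Fin d) := WithLp.toLp 2 (fun i => (z i : ℝ))

/- Ordered product of `Φ` over `supp`: the factors are multiplied so that larger values
of `key` contribute factors further to the left (the value is `1` if no strictly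
`key`-decreasing enumeration of `supp` by a list exists). -/
open Classical in
noncomputable def oprodBy {α G : Type*} [Monoid G] (Φ : α → G) (key : α → ℝ) (supp : Set α) : G :=
  if h : ∃ l : List α, l.Pairwise (fun a b => key b < key a) ∧ ∀ a, a ∈ l ↔ a ∈ supp
  then (h.choose.map Φ).prod else 1

/-- The discrete non-abelian X-ray transform of `F` along the oriented line through `x`
with direction `θ`: the ordered product of `F y` over lattice points `y` on the line,
the point furthest along the orientation contributing the leftmost factor. -/
noncomputable def discS {d : ℕ} {G : Type*} [Monoid G] (F : (Fin d → ℤ) → G)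
    (x θ : EuclideanSpace ℝ (Fin d)) : G :=
  oprodBy F (fun z => ∑ i, ((z i : ℝ) - x i) * θ i)
    {z | (∃ t : ℝ, emb z = x + t • θ) ∧ F z ≠ 1}
/-- The direction of the rational ray γ_z in ℝ²: for z ≠ 0 it is (−z₂, z₁)/|z|, and for
z = 0 it is a fixed rational direction θ₀. -/
def rayDir (θ₀ : EuclideanSpace ℝ (Fin 2)) (z : Fin 2 → ℤ) : EuclideanSpace ℝ (Fin 2) :=
  if z = 0 then θ₀ else ‖emb z‖⁻¹ • emb ![-(z 1), z 0]

section Aux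

variable {α : Type*} {M : Type*} [Monoid M]

lemma list_sorted_unique (key : α → ℝ) (l₁ l₂ : List α)
    (h₁ : l₁.Pairwise (fun a b => key b < key a))
    (h₂ : l₂.Pairwise (fun a b => key b < key a))
    (hm : ∀ a, a ∈ l₁ ↔ a ∈ l₂) : l₁ = l₂ := by
  haveI : IsAntisymm α (fun a b => key b < key a) :=
    ⟨fun a b hab hba => absurd (hab.trans hba) (lt_irrefl _)⟩
  have nd₁ : l₁.Nodup := h₁.imp (fun {a b} hab => by rintro rfl; exact lt_irrefl _ hab)
  have nd₂ : l₂.Nodup := h₂.imp (fun {a b} hab => by rintro rfl; exact lt_irrefl _ hab)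
  exact List.Perm.eq_of_pairwise' h₁ h₂ ((List.perm_ext_iff_of_nodup nd₁ nd₂).mpr hm)

lemma oprodBy_eq_list (Φ : α → M) (key : α → ℝ) (supp : Set α) (l : List α)
    (h1 : l.Pairwise (fun a b => key b < key a)) (h2 : ∀ a, a ∈ l ↔ a ∈ supp) :
    oprodBy Φ key supp = (l.map Φ).prod := by
  have hex : ∃ l : List α, l.Pairwise (fun a b => key b < key a) ∧ ∀ a, a ∈ l ↔ a ∈ supp :=
    ⟨l, h1, h2⟩
  rw [oprodBy, dif_pos hex]
  have hs := hex.choose_spec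
  rw [list_sorted_unique key hex.choose l hs.1 h1 (fun a => (hs.2 a).trans (h2 a).symm)]

lemma prod_filter_eq_prod (Φ : α → M) (p : α → Prop) [DecidablePred p] (l : List α)
    (h : ∀ a ∈ l, ¬ p a → Φ a = 1) :
    ((l.filter (fun a => decide (p a))).map Φ).prod = (l.map Φ).prod := by
  induction l with
  | nil => simp
  | cons a l ih =>
    by_cases hp : p a
    · simp [hp, ih (fun b hb => h b (List.mem_cons_of_mem _ hb))]
    · simp [hp, ih (fun b hb => h b (List.mem_cons_of_mem _ hb)),
        h a List.mem_cons_self hp]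

lemma exists_sorted_list (key : α → ℝ) :
    ∀ s : Finset α, Set.InjOn key ↑s →
      ∃ l : List α, l.Pairwise (fun a b => key b < key a) ∧ ∀ a, a ∈ l ↔ a ∈ s := by
  classical
  intro s
  induction s using Finset.strongInduction with
  | _ s ih =>
    intro hinj
    rcases s.eq_empty_or_nonempty with rfl | hne
    · exact ⟨[], by simp, by simp⟩
    · obtain ⟨b, hb, hmax⟩ := s.exists_max_image key hne
      obtain ⟨l, hl1, hl2⟩ := ih (s.erase b) (Finset.erase_ssubset hb)
        (hinj.mono (by simp [Finset.erase_subset]))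
      refine ⟨b :: l, List.pairwise_cons.mpr ⟨?_, hl1⟩, ?_⟩
      · intro a ha
        have ha' := (hl2 a).mp ha
        have hane : a ≠ b := (Finset.mem_erase.mp ha').1
        have has : a ∈ s := (Finset.mem_erase.mp ha').2
        exact lt_of_le_of_ne (hmax a has) (fun hk => hane (hinj has hb hk))
      · intro a
        simp only [List.mem_cons, hl2, Finset.mem_erase]
        constructor
        · rintro (rfl | ⟨_, has⟩)
          · exact hb
          · exact has
        · intro has
          by_cases hab : a = b
          · exact Or.inl hab
          · exact Or.inr ⟨hab, has⟩

lemma emb_inj {d : ℕ} : Function.Injective (emb (d := d)) := by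
  intro x y hxy
  funext i
  have : ((x i : ℝ)) = (y i : ℝ) := congrArg (fun v => v i) hxy
  exact_mod_cast this

lemma emb_zero {d : ℕ} : emb (d := d) 0 = 0 := by
  ext i
  simp [emb]

lemma finite_ball (r : ℝ) : {y : Fin 2 → ℤ | ‖emb y‖ ≤ r}.Finite := by
  apply Set.Finite.subset (Set.finite_Icc (fun _ : Fin 2 => -⌈r⌉) (fun _ => ⌈r⌉))
  intro y hy
  have hy' : ‖emb y‖ ≤ r := hy
  have habs : ∀ i, |(y i : ℝ)| ≤ r := by
    intro i
    have h1 : ((y i : ℝ)) ^ 2 ≤ ∑ j, ‖emb y j‖ ^ 2 := by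
      have he : ((y i : ℝ)) ^ 2 = ‖emb y i‖ ^ 2 := by simp [emb, sq_abs]
      rw [he]
      exact Finset.single_le_sum (f := fun j => ‖emb y j‖ ^ 2)
        (fun j _ => sq_nonneg _) (Finset.mem_univ i)
    have h2 : |(y i : ℝ)| = Real.sqrt (((y i : ℝ)) ^ 2) := (Real.sqrt_sq_eq_abs _).symm
    rw [h2]
    calc Real.sqrt (((y i : ℝ)) ^ 2) ≤ Real.sqrt (∑ j, ‖emb y j‖ ^ 2) :=
          Real.sqrt_le_sqrt h1
      _ = ‖emb y‖ := (EuclideanSpace.norm_eq _).symm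
      _ ≤ r := hy'
  constructor <;> intro i
  · have := (abs_le.mp (habs i)).1
    have hr1 : (-(⌈r⌉ : ℝ)) ≤ (y i : ℝ) := le_trans (by simpa using neg_le_neg (Int.le_ceil r)) this
    exact_mod_cast hr1
  · have := (abs_le.mp (habs i)).2
    have hr2 : (y i : ℝ) ≤ (⌈r⌉ : ℝ) := le_trans this (Int.le_ceil r)
    exact_mod_cast hr2

lemma norm_lt_of_line {z y : Fin 2 → ℤ} {θ : EuclideanSpace ℝ (Fin 2)} (hθ : θ ≠ 0)
    (horth : inner ℝ (emb z) θ = (0 : ℝ)) (t : ℝ) (ht : emb y = emb z + t • θ)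
    (hne : y ≠ z) : ‖emb z‖ < ‖emb y‖ := by
  have htne : t ≠ 0 := by
    rintro rfl
    simp at ht
    exact hne (emb_inj ht)
  have h1 : ‖emb y‖ ^ 2 = ‖emb z‖ ^ 2 + ‖t • θ‖ ^ 2 := by
    rw [ht, norm_add_sq_real, real_inner_smul_right, horth]
    ring
  have h2 : 0 < ‖t • θ‖ := norm_pos_iff.mpr (smul_ne_zero htne hθ)
  have : ‖emb z‖ ^ 2 < ‖emb y‖ ^ 2 := by nlinarith
  exact lt_of_pow_lt_pow_left₀ 2 (norm_nonneg _) this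

end Aux

lemma discS_eq_prod {d : ℕ} {G : Type*} [Monoid G] (F : (Fin d → ℤ) → G)
    (x θ : EuclideanSpace ℝ (Fin d)) (l : List (Fin d → ℤ))
    (hp : l.Pairwise (fun a b =>
      (∑ i, ((b i : ℝ) - x i) * θ i) < ∑ i, ((a i : ℝ) - x i) * θ i))
    (hmem : ∀ a, a ∈ l ↔ ((∃ t : ℝ, emb a = x + t • θ) ∧ F a ≠ 1)) :
    discS F x θ = (l.map F).prod :=
  oprodBy_eq_list F _ _ l hp hmem

/-- Theorem 2.1, d = 2, uniqueness: the discrete non-abelian X-ray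
transform on the rational rays γ_z, z ∈ ℤ², uniquely determines a function
F : ℤ² → GL(n,ℂ) equal to I outside B_r ∩ ℤ². -/
theorem stmt6 (n : ℕ) (hn : 1 ≤ n) (r : ℝ) (hr : 0 < r)
    (θ₀ : EuclideanSpace ℝ (Fin 2))
    (hθ₀ : ∃ w : Fin 2 → ℤ, w ≠ 0 ∧ θ₀ = ‖emb w‖⁻¹ • emb w)
    (F G : (Fin 2 → ℤ) → GL (Fin n) ℂ)
    (hF : ∀ y : Fin 2 → ℤ, ¬ ‖emb y‖ ≤ r → F y = 1)
    (hG : ∀ y : Fin 2 → ℤ, ¬ ‖emb y‖ ≤ r → G y = 1)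
    (h : ∀ z : Fin 2 → ℤ, discS F (emb z) (rayDir θ₀ z) = discS G (emb z) (rayDir θ₀ z)) :
    F = G := by
    classical
  by_contra hne
  have hTne : ∃ y, F y ≠ G y := Function.ne_iff.mp hne
  set T : Set (Fin 2 → ℤ) := {y | F y ≠ G y} with hT
  have hTball : ∀ y ∈ T, ‖emb y‖ ≤ r := by
    intro y hy
    by_contra h'
    exact hy (by rw [hF y h', hG y h'])
  have hTfin : T.Finite := (finite_ball r).subset hTball
  obtain ⟨z, hzT, hzmax⟩ : ∃ z ∈ T, ∀ y ∈ T, ‖emb y‖ ≤ ‖emb z‖ := by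
    obtain ⟨z, hz, hmax⟩ := hTfin.toFinset.exists_max_image (fun y => ‖emb y‖)
      (by rw [Set.Finite.toFinset_nonempty]; exact hTne)
    exact ⟨z, by simpa using hz, fun y hy => hmax y (by simpa using hy)⟩
  set θ := rayDir θ₀ z with hθdef
  -- θ is nonzero and orthogonal to emb z
  have hθne : θ ≠ 0 := by
    rw [hθdef, rayDir]
    by_cases hz0 : z = 0
    · rw [if_pos hz0]
      obtain ⟨w, hw0, hwθ⟩ := hθ₀
      have hwe : emb w ≠ 0 := fun hc => hw0 (emb_inj (hc.trans emb_zero.symm))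
      rw [hwθ]
      exact smul_ne_zero (inv_ne_zero (norm_ne_zero_iff.mpr hwe)) hwe
    · rw [if_neg hz0]
      have hze : emb z ≠ 0 := fun hc => hz0 (emb_inj (hc.trans emb_zero.symm))
      have hv : emb ![-(z 1), z 0] ≠ 0 := by
        intro hc
        apply hz0
        have h0 : ((-(z 1) : ℤ) : ℝ) = 0 := by
          have := congrArg (fun v => v 0) hc
          simpa [emb] using this
        have h1 : ((z 0 : ℤ) : ℝ) = 0 := by
          have := congrArg (fun v => v 1) hc
          simpa [emb] using this
        funext i
        fin_cases i
        · exact_mod_cast h1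
        · have : ((z 1 : ℤ) : ℝ) = 0 := by
            have := neg_eq_zero.mp (by exact_mod_cast h0)
            exact_mod_cast this
          exact_mod_cast this
      exact smul_ne_zero (inv_ne_zero (norm_ne_zero_iff.mpr hze)) hv
  have horth : inner ℝ (emb z) θ = (0 : ℝ) := by
    rw [hθdef, rayDir]
    by_cases hz0 : z = 0
    · rw [if_pos hz0, hz0, emb_zero, inner_zero_left]
    · rw [if_neg hz0, real_inner_smul_right]
      have : inner ℝ (emb z) (emb ![-(z 1), z 0]) = (0 : ℝ) := by
        rw [PiLp.inner_apply]
        simp only [RCLike.inner_apply, starRingEnd_apply, star_trivial]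
        rw [Fin.sum_univ_two]
        simp [emb]
        ring
      rw [this, mul_zero]
  -- the key function and the line
  have hθpos : 0 < ∑ i, θ i * θ i := by
    have : ∃ i, θ i ≠ 0 := by
      by_contra hc
      push_neg at hc
      exact hθne (by ext i; simpa using hc i)
    obtain ⟨i0, hi0⟩ := this
    exact Finset.sum_pos' (fun i _ => mul_self_nonneg _)
      ⟨i0, Finset.mem_univ i0, mul_self_pos.mpr hi0⟩
  set K : (Fin 2 → ℤ) → ℝ := fun y => ∑ i, ((y i : ℝ) - emb z i) * θ i with hK
  have hKval : ∀ (y : Fin 2 → ℤ) (t : ℝ), emb y = emb z + t • θ →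
      K y = t * ∑ i, θ i * θ i := by
    intro y t ht
    rw [hK]
    have hyi : ∀ i, (y i : ℝ) = emb z i + t * θ i := by
      intro i
      have := congrArg (fun v => v i) ht
      simpa [emb] using this
    rw [Finset.mul_sum]
    refine Finset.sum_congr rfl (fun i _ => ?_)
    rw [hyi i]
    ring
  set Lset : Set (Fin 2 → ℤ) := {y | ∃ t : ℝ, emb y = emb z + t • θ} with hL
  have hKinj : Set.InjOn K Lset := by
    rintro y₁ ⟨t₁, h₁⟩ y₂ ⟨t₂, h₂⟩ hk
    rw [hKval y₁ t₁ h₁, hKval y₂ t₂ h₂] at hk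
    have ht : t₁ = t₂ := mul_right_cancel₀ (ne_of_gt hθpos) hk
    apply emb_inj
    rw [h₁, h₂, ht]
  set S : Set (Fin 2 → ℤ) := Lset ∩ {y | ‖emb y‖ ≤ r} with hS
  have hSfin : S.Finite := (finite_ball r).subset Set.inter_subset_right
  obtain ⟨l, hlp, hlm⟩ := exists_sorted_list K hSfin.toFinset
    (by rw [Set.Finite.coe_toFinset]; exact hKinj.mono Set.inter_subset_left)
  have hlmem : ∀ a, a ∈ l ↔ a ∈ S := fun a => (hlm a).trans (Set.Finite.mem_toFinset _)
  -- both transforms equal products over l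
  have hFprod : discS F (emb z) θ = (l.map F).prod := by
    rw [discS_eq_prod F (emb z) θ (l.filter (fun a => decide (F a ≠ 1)))
      (hlp.sublist (l.filter_sublist)) ?mem]
    · exact prod_filter_eq_prod F (fun a => F a ≠ 1) l
        (fun a _ ha => not_not.mp ha)
    case mem =>
      intro a
      simp only [List.mem_filter, decide_eq_true_eq, hlmem]
      constructor
      · rintro ⟨⟨hline, _⟩, hFa⟩
        exact ⟨hline, hFa⟩
      · rintro ⟨hline, hFa⟩
        refine ⟨⟨hline, ?_⟩, hFa⟩
        by_contra hc
        exact hFa (hF a hc)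
  have hGprod : discS G (emb z) θ = (l.map G).prod := by
    rw [discS_eq_prod G (emb z) θ (l.filter (fun a => decide (G a ≠ 1)))
      (hlp.sublist (l.filter_sublist)) ?mem]
    · exact prod_filter_eq_prod G (fun a => G a ≠ 1) l
        (fun a _ ha => not_not.mp ha)
    case mem =>
      intro a
      simp only [List.mem_filter, decide_eq_true_eq, hlmem]
      constructor
      · rintro ⟨⟨hline, _⟩, hGa⟩
        exact ⟨hline, hGa⟩
      · rintro ⟨hline, hGa⟩
        refine ⟨⟨hline, ?_⟩, hGa⟩
        by_contra hc
        exact hGa (hG a hc)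
  have hprod : (l.map F).prod = (l.map G).prod := by
    rw [← hFprod, ← hGprod]
    exact h z
  -- z belongs to l
  have hzl : z ∈ l := (hlmem z).mpr ⟨⟨0, by simp⟩, hTball z hzT⟩
  obtain ⟨l₁, l₂, hsplit⟩ := List.append_of_mem hzl
  have hnd : l.Nodup := hlp.imp (fun {a b} hab => by rintro rfl; exact lt_irrefl _ hab)
  rw [hsplit] at hnd
  obtain ⟨-, hnd2, hdisj⟩ := List.nodup_append'.mp hnd
  have hz1 : z ∉ l₁ := fun hc => hdisj hc List.mem_cons_self
  have hz2 : z ∉ l₂ := (List.nodup_cons.mp hnd2).1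
  -- F and G agree on all elements of l other than z
  have hFG : ∀ a ∈ l, a ≠ z → F a = G a := by
    intro a hal haz
    obtain ⟨⟨t, hat⟩, -⟩ := (hlmem a).mp hal
    have hlt : ‖emb z‖ < ‖emb a‖ := norm_lt_of_line hθne horth t hat haz
    by_contra hc
    exact absurd (hzmax a hc) (not_le.mpr hlt)
  have e1 : l₁.map F = l₁.map G := List.map_congr_left fun a ha =>
    hFG a (by rw [hsplit]; exact List.mem_append_left _ ha)
      (by rintro rfl; exact hz1 ha)
  have e2 : l₂.map F = l₂.map G := List.map_congr_left fun a ha =>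
    hFG a (by rw [hsplit]; exact List.mem_append_right _ (List.mem_cons_of_mem _ ha))
      (by rintro rfl; exact hz2 ha)
  rw [hsplit] at hprod
  simp only [List.map_append, List.map_cons, List.prod_append, List.prod_cons] at hprod
  rw [e1, e2] at hprod
  have h1 : F z * (l₂.map G).prod = G z * (l₂.map G).prod := mul_left_cancel hprod
  exact hzT (mul_right_cancel h1)
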